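/- Let V be a finite-dimensional real vector space with a nondegenerate symmetric bilinear form g of Lorentz signature (1,n), n ≥ 1. If A and B are symmetric real-valued multilinear maps of rank r on V and A(u,...,u) = B(u,...,u) for every timelike unit vector u (i.e. g(u,u) = −1), then A = B. -/

import Mathlib

open Finset

/-- Expansion of a multilinear map along the diagonal direction `u + t • v`. -/
lemma obs_expand_diag {V : Type*} [AddCommGroup V] [Module ℝ V] {r : ℕ}
    (f : MultilinearMap ℝ (fun _ : Fin r => V) ℝ) (u v : V) (t : ℝ) :
    f (fun _ => u + t • v) =
      ∑ S : Finset (Fin r), t ^ Sᶜ.card * f (Sᶜ.piecewise (fun _ => v) (fun _ => u)) := by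
  have h0 : (fun _ : Fin r => u + t • v)
      = (fun _ : Fin r => u) + (fun _ : Fin r => t • v) := rfl
  rw [h0, f.map_add_univ]
  refine Finset.sum_congr rfl fun S _ => ?_
  have h1 : S.piecewise (fun _ : Fin r => u) (fun _ => t • v)
      = Sᶜ.piecewise (fun i => t • (Sᶜ.piecewise (fun _ : Fin r => v) (fun _ => u)) i)
          (Sᶜ.piecewise (fun _ : Fin r => v) (fun _ => u)) := by
    funext i
    by_cases hi : i ∈ S <;> simp [Finset.piecewise, hi]
  rw [h1, f.map_piecewise_smul]
  simp [smul_eq_mul]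

/-- If a "polynomial" expression vanishes on an infinite set, each coefficient vanishes. -/
lemma obs_coeff_vanish {r : ℕ} (c : Finset (Fin r) → ℝ) {T : Set ℝ} (hT : T.Infinite)
    (h : ∀ t ∈ T, ∑ S : Finset (Fin r), t ^ Sᶜ.card * c S = 0) (k : ℕ) :
    ∑ S : Finset (Fin r), (if Sᶜ.card = k then c S else 0) = 0 := by
  set P : Polynomial ℝ :=
    ∑ S : Finset (Fin r), Polynomial.C (c S) * Polynomial.X ^ Sᶜ.card with hPdef
  have hP : P = 0 := by
    apply Polynomial.eq_zero_of_infinite_isRoot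
    apply hT.mono
    intro t ht
    have : P.eval t = 0 := by
      rw [hPdef]
      simp only [Polynomial.eval_finset_sum, Polynomial.eval_mul, Polynomial.eval_C,
        Polynomial.eval_pow, Polynomial.eval_X]
      rw [← h t ht]
      exact Finset.sum_congr rfl fun S _ => by ring
    exact this
  have hc := congrArg (fun p => Polynomial.coeff p k) hP
  simp only [hPdef, Polynomial.finset_sum_coeff, Polynomial.coeff_C_mul,
    Polynomial.coeff_X_pow, Polynomial.coeff_zero, mul_ite, mul_one, mul_zero] at hc
  calc ∑ S : Finset (Fin r), (if Sᶜ.card = k then c S else 0)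
      = ∑ S : Finset (Fin r), (if k = Sᶜ.card then c S else 0) :=
        Finset.sum_congr rfl fun S _ => by
          by_cases h : Sᶜ.card = k
          · simp [h]
          · simp [h, Ne.symm h]
    _ = 0 := hc

/-- Polarization: a symmetric multilinear map over ℝ vanishing on the diagonal is zero. -/
lemma obs_polarization {V : Type*} [AddCommGroup V] [Module ℝ V] :
    ∀ {r : ℕ} (f : MultilinearMap ℝ (fun _ : Fin r => V) ℝ),
      (∀ (w : Fin r → V) (σ : Equiv.Perm (Fin r)), f (w ∘ σ) = f w) →
      (∀ u : V, f (fun _ => u) = 0) → f = 0 := by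
  intro r
  induction r with
  | zero =>
    intro f _ hdiag
    ext w
    have hw : w = fun _ => (0 : V) := funext fun i => i.elim0
    rw [hw]
    simpa using hdiag 0
  | succ m ih =>
    intro f hsym hdiag
    -- key: f (cons u (diag v)) = 0 for all u v
    have key : ∀ u v : V, f (Fin.cons u (fun _ => v)) = 0 := by
      intro u v
      have hvan : ∀ t ∈ (Set.univ : Set ℝ),
          ∑ S : Finset (Fin (m + 1)), t ^ Sᶜ.card *
            f (Sᶜ.piecewise (fun _ => u) (fun _ => v)) = 0 := by
        intro t _
        rw [← obs_expand_diag f v u t]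
        exact hdiag _
      have h1 := obs_coeff_vanish _ Set.infinite_univ hvan 1
      -- the coefficient-1 sum equals ∑ j, f ({j}.piecewise u v)
      have h2 : ∑ S : Finset (Fin (m + 1)),
          (if Sᶜ.card = 1 then f (Sᶜ.piecewise (fun _ => u) (fun _ => v)) else 0)
          = ∑ j : Fin (m + 1), f (({j} : Finset (Fin (m+1))).piecewise (fun _ => u) (fun _ => v)) := by
        rw [← Finset.sum_filter]
        have himg : Finset.univ.filter (fun S : Finset (Fin (m+1)) => Sᶜ.card = 1)
            = Finset.univ.image (fun j : Fin (m+1) => ({j} : Finset (Fin (m+1)))ᶜ) := by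
          ext S
          simp only [Finset.mem_filter, Finset.mem_univ, true_and, Finset.mem_image]
          constructor
          · intro hS
            obtain ⟨j, hj⟩ := Finset.card_eq_one.mp hS
            exact ⟨j, by rw [← hj, compl_compl]⟩
          · rintro ⟨j, rfl⟩
            simp
        rw [himg, Finset.sum_image (fun a _ b _ h => by
          have := congrArg (fun S : Finset (Fin (m+1)) => Sᶜ) h
          simpa using this)]
        exact Finset.sum_congr rfl fun j _ => by rw [compl_compl]
      -- each summand equals the one for j = 0, via symmetry
      have h3 : ∀ j : Fin (m + 1),
          f (({j} : Finset (Fin (m+1))).piecewise (fun _ => u) (fun _ => v))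
            = f (Fin.cons u (fun _ => v)) := by
        intro j
        have hfun : (({j} : Finset (Fin (m+1))).piecewise (fun _ => u) (fun _ => v))
            ∘ (Equiv.swap (0 : Fin (m+1)) j) = Fin.cons u (fun _ => v) := by
          funext i
          by_cases hi : i = 0
          · subst hi
            simp [Finset.piecewise, Equiv.swap_apply_left, Fin.cons_zero]
          · have hni : Equiv.swap (0 : Fin (m+1)) j i ≠ j := by
              intro hcon
              exact hi ((Equiv.swap (0 : Fin (m+1)) j).injective
                (by rw [hcon, Equiv.swap_apply_left]))
            have : (Fin.cons u (fun _ => v) : Fin (m+1) → V) i = v := by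
              rcases Fin.eq_succ_of_ne_zero hi with ⟨k, rfl⟩
              simp
            simp [Finset.piecewise, hni, this]
        rw [← hfun, hsym]
      rw [h2] at h1
      simp only [h3, Finset.sum_const, Finset.card_univ, Fintype.card_fin, nsmul_eq_mul] at h1
      have hm1 : ((m + 1 : ℕ) : ℝ) ≠ 0 := Nat.cast_ne_zero.mpr (Nat.succ_ne_zero m)
      rcases mul_eq_zero.mp h1 with h1 | h1
      · exact absurd h1 hm1
      · exact h1
    -- now curry and use the inductive hypothesis
    ext w
    have hcurry : ∀ u : V, f.curryLeft u = 0 := by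
      intro u
      apply ih
      · intro w σ
        have hfun : (Fin.cons u w : Fin (m+1) → V) ∘ (Equiv.Perm.decomposeFin.symm (0, σ))
            = Fin.cons u (w ∘ σ) := by
          funext i
          refine Fin.cases ?_ (fun j => ?_) i
          · simp
          · simp [Equiv.Perm.decomposeFin_symm_apply_succ]
        simp only [MultilinearMap.curryLeft_apply]
        rw [← hfun, hsym]
      · intro v
        simpa using key u v
    have := congrArg (fun F : MultilinearMap ℝ (fun _ : Fin m => V) ℝ => F (Fin.tail w))
      (hcurry (w 0))
    simpa [Fin.cons_self_tail] using this

/-- **Observer Principle for Lorentz vector spaces.**  Let `V` be a finite-dimensional real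
vector space with a nondegenerate symmetric bilinear form `g` of Lorentz signature
`(1,n)` (`n ≥ 1`), expressed via an orthonormal-type basis `e` with
`g(e 0, e 0) = -1` and `g(e i, e i) = 1` for `i ≠ 0`.  If `A` and `B` are symmetric
real-valued multilinear maps of rank `r` on `V` and `A(u,…,u) = B(u,…,u)` for every
timelike unit vector `u` (i.e. `g u u = -1`), then `A = B`. -/
theorem observer_principle_lorentz
    {V : Type*} [AddCommGroup V] [Module ℝ V]
    {n : ℕ} (hn : 1 ≤ n)
    (g : V →ₗ[ℝ] V →ₗ[ℝ] ℝ)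
    (hgsym : ∀ u v, g u v = g v u)
    (e : Module.Basis (Fin (n + 1)) ℝ V)
    (hbasis : ∀ i j : Fin (n + 1),
      g (e i) (e j) = if i = j then (if i = 0 then (-1 : ℝ) else 1) else 0)
    {r : ℕ}
    (A B : MultilinearMap ℝ (fun _ : Fin r => V) ℝ)
    (hAsym : ∀ (v : Fin r → V) (σ : Equiv.Perm (Fin r)), A (v ∘ σ) = A v)
    (hBsym : ∀ (v : Fin r → V) (σ : Equiv.Perm (Fin r)), B (v ∘ σ) = B v)
    (h : ∀ u : V, g u u = -1 → A (fun _ => u) = B (fun _ => u)) :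
    A = B := by
  set C : MultilinearMap ℝ (fun _ : Fin r => V) ℝ := A - B with hC
  have hCsym : ∀ (w : Fin r → V) (σ : Equiv.Perm (Fin r)), C (w ∘ σ) = C w := by
    intro w σ
    simp only [hC, MultilinearMap.sub_apply, hAsym, hBsym]
  have hCunit : ∀ u : V, g u u = -1 → C (fun _ => u) = 0 := by
    intro u hu
    simp only [hC, MultilinearMap.sub_apply, h u hu, sub_self]
  -- Step 1: C vanishes on the diagonal for every timelike vector
  have hCtime : ∀ u : V, g u u < 0 → C (fun _ => u) = 0 := by
    intro u hu
    set t : ℝ := Real.sqrt (-g u u) with ht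
    have ht2 : t ^ 2 = -g u u := Real.sq_sqrt (by linarith)
    have htpos : 0 < t := Real.sqrt_pos.mpr (by linarith)
    have hw : g (t⁻¹ • u) (t⁻¹ • u) = -1 := by
      simp only [map_smul, LinearMap.smul_apply, smul_eq_mul]
      have : t⁻¹ * (t⁻¹ * g u u) = (g u u) / t ^ 2 := by ring
      rw [this, ht2, div_neg, div_self (ne_of_lt hu)]
    have hzero := hCunit _ hw
    have hrep : (fun _ : Fin r => u) = fun _ : Fin r => t • (t⁻¹ • u) := by
      funext i
      rw [smul_smul, mul_inv_cancel₀ (ne_of_gt htpos), one_smul]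
    rw [hrep]
    have := C.map_smul_univ (fun _ : Fin r => t) (fun _ : Fin r => t⁻¹ • u)
    rw [this, hzero, smul_zero]
  -- Step 2: C vanishes on the whole diagonal
  have hCdiag : ∀ v : V, C (fun _ => v) = 0 := by
    intro v
    have he00 : g (e 0) (e 0) = -1 := by rw [hbasis 0 0]; simp
    set a : ℝ := g (e 0) v with ha
    set b : ℝ := g v v with hb
    set K : ℝ := 2 * |a| + |b| + 1 with hK
    have hKpos : 0 < K := by positivity
    have hK1 : 1 ≤ K := by
      have := abs_nonneg a; have := abs_nonneg b; rw [hK]; linarith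
    have hIoo : (Set.Ioo (0:ℝ) K⁻¹).Infinite :=
      Set.Ioo_infinite (by positivity)
    have hroot : ∀ t ∈ Set.Ioo (0:ℝ) K⁻¹,
        ∑ S : Finset (Fin r), t ^ Sᶜ.card *
          C (Sᶜ.piecewise (fun _ => v) (fun _ => e 0)) = 0 := by
      rintro t ⟨ht0, htK⟩
      rw [← obs_expand_diag C (e 0) v t]
      apply hCtime
      have hexp : g (e 0 + t • v) (e 0 + t • v) = -1 + 2 * t * a + t ^ 2 * b := by
        simp only [map_add, map_smul, LinearMap.add_apply, LinearMap.smul_apply,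
          smul_eq_mul, he00, ← ha, ← hb]
        rw [hgsym v (e 0)]
        ring
      rw [hexp]
      have habs1 : a ≤ |a| := le_abs_self a
      have habs2 : b ≤ |b| := le_abs_self b
      have hKinv : t * K < 1 := by
        calc t * K < K⁻¹ * K := by exact mul_lt_mul_of_pos_right htK hKpos
          _ = 1 := inv_mul_cancel₀ (ne_of_gt hKpos)
      have htlt1 : t < 1 := by
        nlinarith [abs_nonneg a, abs_nonneg b]
      nlinarith [abs_nonneg a, abs_nonneg b, sq_nonneg t]
    have hcoeff := obs_coeff_vanish _ hIoo hroot r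
    have hne : ∀ S : Finset (Fin r), S ∈ Finset.univ → S ≠ ∅ →
        (if Sᶜ.card = r then C (Sᶜ.piecewise (fun _ => v) (fun _ => e 0)) else 0) = 0 := by
      intro S _ hS
      have hcard : Sᶜ.card ≠ r := by
        rw [Finset.card_compl, Fintype.card_fin]
        have h1 : 0 < S.card := Finset.card_pos.mpr (Finset.nonempty_iff_ne_empty.mpr hS)
        have h2 : S.card ≤ r := by simpa using Finset.card_le_univ S
        omega
      simp [hcard]
    have hsum := Finset.sum_eq_single (∅ : Finset (Fin r)) hne
      (fun hmem => absurd (Finset.mem_univ _) hmem)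
    rw [hsum] at hcoeff
    have hpw : ((∅ : Finset (Fin r))ᶜ.piecewise (fun _ => v) (fun _ => e 0)) = fun _ => v := by
      funext i
      simp [Finset.piecewise]
    rw [hpw] at hcoeff
    simpa using hcoeff
  have : C = 0 := obs_polarization C hCsym hCdiag
  have := sub_eq_zero.mp (by rw [← hC]; exact this)
  exact this
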